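/- Every Bézout commutative ring having adequate range 1 is locally stable. -/

import Mathlib

open Matrix

/-- A commutative ring `T` has stable range 1: whenever `cT + dT = T`,
there exists `y` with `c + d*y` a unit. -/
def StableRange1 (T : Type) [CommRing T] : Prop :=
  ∀ c d : T, IsCoprime c d → ∃ y : T, IsUnit (c + d * y)

/-- The multiplicative set `S_a = { b | aR + bR = R }`. -/
def Sa (R : Type) [CommRing R] (a : R) : Submonoid R where
  carrier := {x | IsCoprime a x}
  one_mem' := isCoprime_one_right
  mul_mem' := fun hb hc => IsCoprime.mul_right hb hc

/-- `R` is locally stable: whenever `aR + bR = R` there is `y` such that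
`R/(a+by)R` has stable range 1. -/
def LocallyStable (R : Type) [CommRing R] : Prop :=
  ∀ a b : R, IsCoprime a b → ∃ y : R,
    StableRange1 (R ⧸ Ideal.span ({a + b * y} : Set R))

/-- `c` is an adequate element. -/
def Adequate {R : Type} [CommRing R] (c : R) : Prop :=
  ∀ a : R, ∃ r s : R, c = r * s ∧ IsCoprime r a ∧
    ∀ s' : R, s' ∣ s → ¬ IsUnit s' → ¬ IsCoprime s' a

/-- A ring is clean if every element is the sum of an idempotent and a unit. -/
def IsCleanRing (T : Type) [CommRing T] : Prop :=
  ∀ x : T, ∃ e u : T, IsIdempotentElem e ∧ IsUnit u ∧ x = e + u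

/-- A ring is VNL if for every `x`, `x` or `1 - x` is von Neumann regular. -/
def IsVNLRing (T : Type) [CommRing T] : Prop :=
  ∀ x : T, (∃ y : T, x = x * y * x) ∨ (∃ y : T, (1 - x) = (1 - x) * y * (1 - x))

/-- `R` has almost stable range 1: every proper homomorphic image has stable range 1. -/
def AlmostStableRange1 (R : Type) [CommRing R] : Prop :=
  ∀ I : Ideal R, I ≠ ⊥ → StableRange1 (R ⧸ I)

/-- `R` has adequate range 1. -/
def AdequateRange1 (R : Type) [CommRing R] : Prop :=
  ∀ a b : R, IsCoprime a b → ∃ y : R, Adequate (a + b * y)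

/-- A (rectangular) matrix admits diagonal reduction. -/
def DiagonalReduction {R : Type} [CommRing R] {m n : ℕ}
    (A : Matrix (Fin m) (Fin n) R) : Prop :=
  ∃ (P : Matrix (Fin m) (Fin m) R) (Q : Matrix (Fin n) (Fin n) R),
    IsUnit P ∧ IsUnit Q ∧
    (∀ (i : Fin m) (j : Fin n), (i : ℕ) ≠ (j : ℕ) → (P * A * Q) i j = 0) ∧
    (∀ (i i' : Fin m) (j j' : Fin n), (i : ℕ) = (j : ℕ) → (i' : ℕ) = (j' : ℕ) →
      (i : ℕ) + 1 = (i' : ℕ) → (P * A * Q) i j ∣ (P * A * Q) i' j')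

/-- `R` is an elementary divisor ring. -/
def ElementaryDivisorRing (R : Type) [CommRing R] : Prop :=
  ∀ (m n : ℕ) (A : Matrix (Fin m) (Fin n) R), DiagonalReduction A

/-- `GE n R` : the subgroup of `GL n R` generated by elementary matrices. -/
def GE (n : ℕ) (R : Type) [CommRing R] : Subgroup (GL (Fin n) R) :=
  Subgroup.closure
    { M | ∃ t : Matrix.TransvectionStruct (Fin n) R,
        (M : Matrix (Fin n) (Fin n) R) = t.toMatrix }

theorem adequate_quot_sr1 {R : Type} [CommRing R] [IsBezout R] {c : R}
    (hc : Adequate c) : StableRange1 (R ⧸ Ideal.span ({c} : Set R)) := by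
  intro ub vb hcop
  obtain ⟨u, rfl⟩ := Ideal.Quotient.mk_surjective ub
  obtain ⟨v, rfl⟩ := Ideal.Quotient.mk_surjective vb
  obtain ⟨xb, yb, hxy⟩ := hcop
  obtain ⟨x, rfl⟩ := Ideal.Quotient.mk_surjective xb
  obtain ⟨y, rfl⟩ := Ideal.Quotient.mk_surjective yb
  have h1 : Ideal.Quotient.mk (Ideal.span ({c} : Set R)) (x*u + y*v - 1) = 0 := by
    rw [_root_.map_sub, _root_.map_add, _root_.map_mul, _root_.map_mul, _root_.map_one, hxy, sub_self]
  have hmem := Ideal.Quotient.eq_zero_iff_mem.mp h1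
  obtain ⟨z, hz⟩ := Ideal.mem_span_singleton.mp hmem
  -- hz : x*u + y*v - 1 = c * z
  obtain ⟨r, s, hrs, hru, hs'⟩ := hc u
  set w := u + v * r with hw
  set d := IsBezout.gcd w c with hd
  have hdw : d ∣ w := IsBezout.gcd_dvd_left w c
  have hdc : d ∣ c := IsBezout.gcd_dvd_right w c
  obtain ⟨p, q, hpq⟩ := IsBezout.gcd_eq_sum w c
  -- show IsCoprime d r
  set g := IsBezout.gcd d r with hg
  have hgd : g ∣ d := IsBezout.gcd_dvd_left d r
  have hgr : g ∣ r := IsBezout.gcd_dvd_right d r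
  have hgu : IsCoprime g u := hru.of_isCoprime_of_dvd_left hgr
  have hgdu : g ∣ u := by
    have h2 : g ∣ v * r := Dvd.dvd.mul_left hgr v
    have h3 : g ∣ w := hgd.trans hdw
    have : u = w - v * r := by rw [hw]; ring
    rw [this]; exact dvd_sub h3 h2
  have hgunit : IsUnit g := hgu.isUnit_of_dvd' dvd_rfl hgdu
  obtain ⟨a1, b1, hab1⟩ := IsBezout.gcd_eq_sum d r
  obtain ⟨gi, hgi⟩ := hgunit.exists_left_inv
  have hdr : IsCoprime d r := ⟨gi * a1, gi * b1, by
    have : gi * (a1 * d + b1 * r) = gi * g := by rw [hab1]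
    calc gi * a1 * d + gi * b1 * r = gi * (a1 * d + b1 * r) := by ring
    _ = gi * g := by rw [hab1]
    _ = 1 := hgi⟩
  have hds : d ∣ s := hdr.dvd_of_dvd_mul_left (by rw [← hrs]; exact hdc)
  -- IsCoprime d v
  have hdv : IsCoprime d v := by
    obtain ⟨k1, hk1⟩ := hdw
    obtain ⟨k2, hk2⟩ := hdc
    refine ⟨x * k1 - z * k2, y - x * r, ?_⟩
    have hu : u = w - v * r := by rw [hw]; ring
    have : x * u + y * v - 1 = c * z := hz
    rw [hu] at this
    -- x*(w - v*r) + y*v - 1 = c*z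
    -- goal: (x*k1 - z*k2)*d + (y - x*r)*v = 1
    have hwd : w = d * k1 := hk1
    have hcd : c = d * k2 := hk2
    linear_combination this - x * hwd + z * hcd
  have hdvr : IsCoprime d (v * r) := hdv.mul_right hdr
  have hdu : IsCoprime d u := by
    obtain ⟨p2, q2, hpq2⟩ := hdvr
    obtain ⟨k1, hk1⟩ := hdw
    refine ⟨p2 + q2 * k1, -q2, ?_⟩
    have hvr : v * r = d * k1 - u := by rw [← hk1, hw]; ring
    calc (p2 + q2 * k1) * d + -q2 * u = p2 * d + q2 * (d * k1 - u) := by ring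
    _ = p2 * d + q2 * (v * r) := by rw [← hvr]
    _ = 1 := hpq2
  have hdunit : IsUnit d := by
    by_contra hnd
    exact hs' d hds hnd hdu
  obtain ⟨di, hdi⟩ := hdunit.exists_left_inv
  refine ⟨Ideal.Quotient.mk _ r, ?_⟩
  have hmkc : Ideal.Quotient.mk (Ideal.span ({c} : Set R)) c = 0 :=
    Ideal.Quotient.eq_zero_iff_mem.mpr (Ideal.mem_span_singleton_self c)
  have key : (Ideal.Quotient.mk (Ideal.span ({c} : Set R)) (di * p)) *
      (Ideal.Quotient.mk _ u + Ideal.Quotient.mk _ v * Ideal.Quotient.mk _ r) = 1 := by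
    have h4 : di * p * w + di * q * c = 1 := by
      calc di * p * w + di * q * c = di * (p * w + q * c) := by ring
      _ = di * d := by rw [hpq]
      _ = 1 := hdi
    have h5 : Ideal.Quotient.mk (Ideal.span ({c} : Set R)) (di * p * w + di * q * c) = 1 := by
      rw [h4, _root_.map_one]
    rw [_root_.map_add, _root_.map_mul, _root_.map_mul, _root_.map_mul, hmkc, mul_zero, add_zero] at h5
    rw [← h5, hw, _root_.map_add, _root_.map_mul, _root_.map_mul]
  exact IsUnit.of_mul_eq_one _ (by rw [mul_comm] at key; exact key)

/-- Every Bézout commutative ring having adequate range 1 is locally stable. -/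
theorem stmt_5 (R : Type) [CommRing R] [IsBezout R] (h : AdequateRange1 R) :
    LocallyStable R := by
  intro a b hab
  obtain ⟨y, hy⟩ := h a b hab
  exact ⟨y, adequate_quot_sr1 hy⟩
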